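/- Let R₃ ⊆ Hom_R(H, 𝔱) be the submodule spanned by the maps γ_{s,t} : x ↦ ν(x, e_s ∧ e_t) for 1 ≤ s < t ≤ 2g, and let N ⊆ Hom_R(H, Λ²H) be the submodule consisting of the maps f_b : x ↦ x ∧ b for b ∈ H. Then, under the isomorphism 𝒜 ≅ Aut(L₃) induced by the action (F, f, A)·(α, a, v) = ( 2·F(Av) + (A ⊗ Λ²A)(α) + Υ_f( 2·f(Av) + 2·Λ²A(a) ), 2·f(Av) + Λ²A(a), Av ), the inner automorphism group Inn(L₃) corresponds to the subset R₃ × N × {id_H} of 𝒜. -/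

import Mathlib

namespace Paper

open ExteriorAlgebra

open scoped TensorProduct

variable {R : Type*} [CommRing R] {H : Type*} [AddCommGroup H] [Module R H]

theorem wedge_mem (v w : H) : ι R v * ι R w ∈ ⋀[R]^2 H := by
  rw [show (⋀[R]^2 H) = LinearMap.range (ι R (M := H)) * LinearMap.range (ι R (M := H)) from
    sq _]
  exact Submodule.mul_mem_mul (LinearMap.mem_range_self _ v) (LinearMap.mem_range_self _ w)

/-- The wedge product `H × H → Λ²H` as a bilinear map. -/
noncomputable def wedge : H →ₗ[R] H →ₗ[R] ↥(⋀[R]^2 H) :=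
  LinearMap.mk₂ R (fun v w => ⟨ι R v * ι R w, wedge_mem v w⟩)
    (fun v v' w => Subtype.ext (by simp [add_mul]))
    (fun c v w => Subtype.ext (by simp [smul_mul_assoc]))
    (fun v w w' => Subtype.ext (by simp [mul_add]))
    (fun c v w => Subtype.ext (by simp [mul_smul_comm]))

/-- The submodule `𝔱 ⊆ H ⊗ Λ²H` spanned by the elements `u⊗(v∧w) − v⊗(w∧u)`. -/
noncomputable def tSub (R : Type*) [CommRing R] (H : Type*) [AddCommGroup H] [Module R H] :
    Submodule R (H ⊗[R] ↥(⋀[R]^2 H)) :=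
  Submodule.span R
    {x | ∃ u v w : H, x = u ⊗ₜ[R] (wedge v w) - v ⊗ₜ[R] (wedge w u)}

theorem map_exteriorPower_le (f : H →ₗ[R] H) (n : ℕ) :
    Submodule.map (ExteriorAlgebra.map f).toLinearMap (⋀[R]^n H) ≤ ⋀[R]^n H := by
  rw [show ((⋀[R]^n H : Submodule R (ExteriorAlgebra R H))) =
      (LinearMap.range (ι R (M := H))) ^ n from rfl, Submodule.map_pow]
  have h1 : Submodule.map (ExteriorAlgebra.map f).toLinearMap
      (LinearMap.range (ι R (M := H))) ≤ LinearMap.range (ι R (M := H)) := by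
    intro x hx
    rw [Submodule.mem_map] at hx
    obtain ⟨y, hy, rfl⟩ := hx
    rw [LinearMap.mem_range] at hy
    obtain ⟨v, rfl⟩ := hy
    exact ⟨f v, (map_apply_ι f v).symm⟩
  induction n with
  | zero => simp
  | succ n ih =>
      rw [pow_succ, pow_succ]
      exact mul_le_mul' ih h1

/-- The endomorphism `Λ²f` of `Λ²H` induced by an endomorphism `f` of `H`. -/
noncomputable def map2 (f : H →ₗ[R] H) : ↥(⋀[R]^2 H) →ₗ[R] ↥(⋀[R]^2 H) :=
  (ExteriorAlgebra.map f).toLinearMap.restrict (p := ⋀[R]^2 H) (q := ⋀[R]^2 H)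
    (fun x hx => map_exteriorPower_le f 2 (Submodule.mem_map_of_mem hx))

theorem map2_wedge (f : H →ₗ[R] H) (v w : H) :
    map2 f (wedge (R := R) v w) = wedge (R := R) (f v) (f w) :=
  Subtype.ext (by simp [map2, LinearMap.restrict_apply, wedge, map_apply_ι])

theorem tSub_stable (A : H →ₗ[R] H) (x : H ⊗[R] ↥(⋀[R]^2 H)) (hx : x ∈ tSub R H) :
    TensorProduct.map A (map2 A) x ∈ tSub R H := by
  induction hx using Submodule.span_induction with
  | mem y hy =>
      obtain ⟨u, v, w, rfl⟩ := hy
      rw [map_sub, TensorProduct.map_tmul, TensorProduct.map_tmul, map2_wedge, map2_wedge]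
      exact Submodule.subset_span ⟨A u, A v, A w, rfl⟩
  | zero => simpa using Submodule.zero_mem _
  | add a b ha hb iha ihb => rw [map_add]; exact Submodule.add_mem _ iha ihb
  | smul c a ha iha => rw [map_smul]; exact Submodule.smul_mem _ _ iha

/-- The action of an endomorphism `A` of `H` on `𝔱 ⊆ H ⊗ Λ²H`, by `A ⊗ Λ²A`. -/
noncomputable def tRestrict (A : H →ₗ[R] H) : ↥(tSub R H) →ₗ[R] ↥(tSub R H) :=
  (TensorProduct.map A (map2 A)).restrict (p := tSub R H) (q := tSub R H) (tSub_stable A)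


/-- Helper instances for the submodule `𝔱` (typeclass search struggles with the nested
subtype). -/
noncomputable instance tSubAddCommGroup : AddCommGroup ↥(tSub R H) :=
  @Submodule.addCommGroup R (H ⊗[R] ↥(⋀[R]^2 H)) _ _ _ (tSub R H)

noncomputable instance tSubModule : Module R ↥(tSub R H) :=
  @Submodule.module R (H ⊗[R] ↥(⋀[R]^2 H)) _ _ _ (tSub R H)


/-! ### Auxiliary lemmas -/

theorem wedge_self (v : H) : wedge (R := R) v v = 0 :=
  Subtype.ext (by simp [wedge, ι_sq_zero])

theorem wedge_anti (v w : H) : wedge (R := R) w v = - wedge (R := R) v w := by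
  have h := wedge_self (R := R) (v + w)
  simp only [map_add, LinearMap.add_apply, wedge_self, zero_add, add_zero] at h
  exact eq_neg_of_add_eq_zero_left h

theorem wedge_span : Submodule.span R
    (Set.range fun p : H × H => wedge (R := R) p.1 p.2) = ⊤ := by
  rw [Submodule.eq_top_iff']
  rintro ⟨x, hx⟩
  have hx' : x ∈ LinearMap.range (ι R (M := H)) * LinearMap.range (ι R (M := H)) := by
    rwa [show (⋀[R]^2 H) = LinearMap.range (ι R (M := H)) * LinearMap.range (ι R (M := H)) from
      sq _] at hx
  revert hx
  refine Submodule.mul_induction_on'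
    (C := fun r _ => ∀ h : r ∈ ⋀[R]^2 H,
      (⟨r, h⟩ : ↥(⋀[R]^2 H)) ∈ Submodule.span R
        (Set.range fun p : H × H => wedge (R := R) p.1 p.2)) ?_ ?_ hx'
  · rintro _ ⟨u, rfl⟩ _ ⟨v, rfl⟩ h
    exact Submodule.subset_span ⟨(u, v), rfl⟩
  · intro x hx y hy cx cy h
    have hx2 : x ∈ ⋀[R]^2 H := by
      rw [show (⋀[R]^2 H) = LinearMap.range (ι R (M := H)) * LinearMap.range (ι R (M := H)) from
        sq _]; exact hx
    have hy2 : y ∈ ⋀[R]^2 H := by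
      rw [show (⋀[R]^2 H) = LinearMap.range (ι R (M := H)) * LinearMap.range (ι R (M := H)) from
        sq _]; exact hy
    have : (⟨x + y, h⟩ : ↥(⋀[R]^2 H)) = ⟨x, hx2⟩ + ⟨y, hy2⟩ := rfl
    rw [this]
    exact Submodule.add_mem _ (cx hx2) (cy hy2)

theorem ext_wedge {M : Type*} [AddCommGroup M] [Module R M]
    {g₁ g₂ : ↥(⋀[R]^2 H) →ₗ[R] M}
    (h : ∀ u v : H, g₁ (wedge (R := R) u v) = g₂ (wedge (R := R) u v)) : g₁ = g₂ :=
  LinearMap.ext_on wedge_span (by rintro x ⟨⟨u, v⟩, rfl⟩; exact h u v)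

theorem basis_wedge_span {n : ℕ} (e : Module.Basis (Fin n) R H) :
    Submodule.span R
      {c : ↥(⋀[R]^2 H) | ∃ s t : Fin n, s < t ∧ c = wedge (R := R) (e s) (e t)} = ⊤ := by
  set T := {c : ↥(⋀[R]^2 H) | ∃ s t : Fin n, s < t ∧ c = wedge (R := R) (e s) (e t)} with hT
  have step1 : ∀ (s : Fin n) (v : H), wedge (R := R) (e s) v ∈ Submodule.span R T := by
    intro s v
    have hv : v ∈ Submodule.span R (Set.range e) := by rw [e.span_eq]; trivial
    induction hv using Submodule.span_induction with
    | mem y hy =>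
        obtain ⟨t, rfl⟩ := hy
        rcases lt_trichotomy s t with h | h | h
        · exact Submodule.subset_span ⟨s, t, h, rfl⟩
        · subst h; rw [wedge_self]; exact zero_mem _
        · rw [wedge_anti (e t) (e s)]
          exact neg_mem (Submodule.subset_span ⟨t, s, h, rfl⟩)
    | zero => rw [map_zero]; exact zero_mem _
    | add a b ha hb iha ihb => rw [map_add]; exact add_mem iha ihb
    | smul c a ha iha => rw [map_smul]; exact Submodule.smul_mem _ _ iha
  have key : ∀ u v : H, wedge (R := R) u v ∈ Submodule.span R T := by
    intro u v
    have hu : u ∈ Submodule.span R (Set.range e) := by rw [e.span_eq]; trivial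
    induction hu using Submodule.span_induction with
    | mem y hy => obtain ⟨s, rfl⟩ := hy; exact step1 s v
    | zero => rw [map_zero, LinearMap.zero_apply]; exact zero_mem _
    | add a b ha hb iha ihb =>
        rw [map_add, LinearMap.add_apply]; exact add_mem iha ihb
    | smul c a ha iha =>
        rw [map_smul, LinearMap.smul_apply]; exact Submodule.smul_mem _ _ iha
  rw [eq_top_iff, ← wedge_span]
  refine Submodule.span_le.mpr ?_
  rintro _ ⟨⟨u, v⟩, rfl⟩
  exact key u v

theorem map2_one : map2 (LinearMap.id : H →ₗ[R] H) = LinearMap.id := by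
  apply LinearMap.ext
  intro x
  apply Subtype.ext
  simp [map2, LinearMap.restrict_apply, ExteriorAlgebra.map_id]

theorem tRestrict_one : tRestrict (LinearMap.id : H →ₗ[R] H) = LinearMap.id := by
  apply LinearMap.ext
  intro x
  apply Subtype.ext
  simp [tRestrict, LinearMap.restrict_apply, map2_one, TensorProduct.map_id]

section A3

variable [Invertible (2 : R)] [Invertible (3 : R)]

/-- The action `(A·f)(u) = Λ²A(f(A⁻¹u))` of `GL(H)` on `Hom(H, Λ²H)`. -/
noncomputable def actf (A : H ≃ₗ[R] H) (f : H →ₗ[R] ↥(⋀[R]^2 H)) : H →ₗ[R] ↥(⋀[R]^2 H) :=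
  map2 (A : H →ₗ[R] H) ∘ₗ f ∘ₗ (A.symm : H →ₗ[R] H)

/-- The action `(A·F)(u) = (A ⊗ Λ²A)(F(A⁻¹u))` of `GL(H)` on `Hom(H, 𝔱)`. -/
noncomputable def actF (A : H ≃ₗ[R] H) (F : H →ₗ[R] ↥(tSub R H)) : H →ₗ[R] ↥(tSub R H) :=
  tRestrict (A : H →ₗ[R] H) ∘ₗ F ∘ₗ (A.symm : H →ₗ[R] H)

/-- The multiplication on `𝒜 = Hom(H, 𝔱) × Hom(H, Λ²H) × GL(H)`:
`(F', f', A')·(F, f, A) = (F' + A'·F + Υ_{f'} ∘ (A'·f) − Υ_{A'·f} ∘ f', f' + A'·f, A'A)`. -/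
noncomputable def aMul (Υ : (H →ₗ[R] ↥(⋀[R]^2 H)) → (↥(⋀[R]^2 H) →ₗ[R] ↥(tSub R H)))
    (x y : (H →ₗ[R] ↥(tSub R H)) × (H →ₗ[R] ↥(⋀[R]^2 H)) × (H ≃ₗ[R] H)) :
    (H →ₗ[R] ↥(tSub R H)) × (H →ₗ[R] ↥(⋀[R]^2 H)) × (H ≃ₗ[R] H) :=
  (x.1 + actF x.2.2 y.1 + Υ x.2.1 ∘ₗ actf x.2.2 y.2.1 - Υ (actf x.2.2 y.2.1) ∘ₗ x.2.1,
    x.2.1 + actf x.2.2 y.2.1,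
    x.2.2 * y.2.2)

/-- The multiplication on `L₃ = 𝔱 × Λ²H × H`. -/
noncomputable def l3mul (ν : H →ₗ[R] ↥(⋀[R]^2 H) →ₗ[R] ↥(tSub R H))
    (x y : ↥(tSub R H) × ↥(⋀[R]^2 H) × H) : ↥(tSub R H) × ↥(⋀[R]^2 H) × H :=
  (x.1 + y.1 + ⅟(2 : R) • ν x.2.2 y.2.1 - ⅟(2 : R) • ν y.2.2 x.2.1 +
      (⅟(2 : R) * ⅟(2 : R) * ⅟(3 : R)) • ν x.2.2 (wedge (R := R) x.2.2 y.2.2) +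
      (⅟(2 : R) * ⅟(2 : R) * ⅟(3 : R)) • ν y.2.2 (wedge (R := R) y.2.2 x.2.2),
    x.2.1 + y.2.1 + ⅟(2 : R) • wedge (R := R) x.2.2 y.2.2,
    x.2.2 + y.2.2)


theorem nu_swap (ν : H →ₗ[R] ↥(⋀[R]^2 H) →ₗ[R] ↥(tSub R H))
    (hν : ∀ u v w : H,
      (↑(ν u (wedge (R := R) v w)) : H ⊗[R] ↥(⋀[R]^2 H)) =
        ((2 : R) * ⅟(3 : R)) • u ⊗ₜ[R] wedge (R := R) v w -
          ⅟(3 : R) • v ⊗ₜ[R] wedge (R := R) w u -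
          ⅟(3 : R) • w ⊗ₜ[R] wedge (R := R) u v)
    (v u u' : H) :
    ν v (wedge (R := R) u u') = ν u (wedge (R := R) v u') - ν u' (wedge (R := R) v u) := by
  rw [Subtype.ext_iff,
    show ((ν u (wedge (R := R) v u') - ν u' (wedge (R := R) v u) : ↥(tSub R H)) :
        H ⊗[R] ↥(⋀[R]^2 H)) =
      (↑(ν u (wedge (R := R) v u')) : H ⊗[R] ↥(⋀[R]^2 H)) - ↑(ν u' (wedge (R := R) v u))
      from rfl, hν, hν, hν,
    show wedge (R := R) u' v = -wedge (R := R) v u' from wedge_anti v u',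
    show wedge (R := R) u' u = -wedge (R := R) u u' from wedge_anti u u',
    show wedge (R := R) u v = -wedge (R := R) v u from wedge_anti v u]
  simp only [TensorProduct.tmul_neg, smul_neg]
  module

set_option synthInstance.maxHeartbeats 1000000 in
set_option maxHeartbeats 1000000 in
theorem conj_formula (ν : H →ₗ[R] ↥(⋀[R]^2 H) →ₗ[R] ↥(tSub R H))
    (α : ↥(tSub R H)) (a : ↥(⋀[R]^2 H)) (v : H)
    (β : ↥(tSub R H)) (b : ↥(⋀[R]^2 H)) (w : H) :
    l3mul ν (l3mul ν (α, a, v) (β, b, w)) (-α, -a, -v) =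
      (β + ν v b - ν w a + ⅟(2 : R) • ν v (wedge (R := R) v w),
        b + wedge (R := R) v w, w) := by
  have h2 : (2 : R) * ⅟(2 : R) = 1 := mul_invOf_self 2
  have h3 : (3 : R) * ⅟(3 : R) = 1 := mul_invOf_self 3
  simp only [l3mul]
  refine Prod.ext ?_ (Prod.ext ?_ ?_)
  · dsimp only
    simp only [map_add, map_neg, map_smul, LinearMap.add_apply, LinearMap.neg_apply,
      LinearMap.smul_apply, wedge_self, smul_neg, neg_neg, map_zero, smul_zero,
      LinearMap.zero_apply, add_zero, zero_add, neg_zero,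
      show wedge (R := R) w v = -wedge (R := R) v w from wedge_anti v w]
    match_scalars <;> try ring
    · linear_combination h2
    · linear_combination -h2
    · linear_combination (⅟(2 : R) * ⅟(2 : R)) * h3 + ⅟(2 : R) * h2
  · dsimp only
    simp only [map_add, map_neg, LinearMap.add_apply, LinearMap.neg_apply,
      wedge_self, smul_neg, neg_neg, map_zero, add_zero, zero_add, neg_zero,
      show wedge (R := R) w v = -wedge (R := R) v w from wedge_anti v w]
    match_scalars <;> try ring
    linear_combination h2
  · dsimp only
    abel


theorem l3mul_inv1 (ν : H →ₗ[R] ↥(⋀[R]^2 H) →ₗ[R] ↥(tSub R H))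
    (a : ↥(⋀[R]^2 H)) (v : H) :
    l3mul ν ((0 : ↥(tSub R H)), a, v) ((0 : ↥(tSub R H)), -a, -v) = (0, 0, 0) := by
  simp only [l3mul, map_neg, LinearMap.neg_apply, neg_neg, wedge_self, map_zero,
    smul_zero, smul_neg, add_zero, zero_add, sub_neg_eq_add, neg_add_cancel,
    add_neg_cancel, neg_zero]

theorem l3mul_inv2 (ν : H →ₗ[R] ↥(⋀[R]^2 H) →ₗ[R] ↥(tSub R H))
    (a : ↥(⋀[R]^2 H)) (v : H) :
    l3mul ν ((0 : ↥(tSub R H)), -a, -v) ((0 : ↥(tSub R H)), a, v) = (0, 0, 0) := by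
  simp only [l3mul, map_neg, LinearMap.neg_apply, neg_neg, wedge_self, map_zero,
    smul_zero, smul_neg, add_zero, zero_add, sub_neg_eq_add, neg_add_cancel,
    add_neg_cancel, neg_zero]

theorem flip_wedge_half (b₀ u : H) :
    LinearMap.flip (wedge (R := R) (H := H)) b₀ u =
      ⅟(2 : R) • wedge (R := R) ((-(2 : R)) • b₀) u := by
  rw [LinearMap.flip_apply, map_smul, LinearMap.smul_apply, smul_smul, mul_neg,
    invOf_mul_self, show wedge (R := R) u b₀ = -wedge (R := R) b₀ u from wedge_anti b₀ u,
    neg_one_smul]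

set_option maxHeartbeats 2000000 in
set_option synthInstance.maxHeartbeats 1000000 in
theorem theta_conj_comp (ν : H →ₗ[R] ↥(⋀[R]^2 H) →ₗ[R] ↥(tSub R H))
    (hν : ∀ u v w : H,
      (↑(ν u (wedge (R := R) v w)) : H ⊗[R] ↥(⋀[R]^2 H)) =
        ((2 : R) * ⅟(3 : R)) • u ⊗ₜ[R] wedge (R := R) v w -
          ⅟(3 : R) • v ⊗ₜ[R] wedge (R := R) w u -
          ⅟(3 : R) • w ⊗ₜ[R] wedge (R := R) u v)
    (f : H →ₗ[R] ↥(⋀[R]^2 H)) (Υf : ↥(⋀[R]^2 H) →ₗ[R] ↥(tSub R H)) (v : H)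
    (hf2 : ∀ u, f u = ⅟(2 : R) • wedge (R := R) v u)
    (hU : ∀ u u', Υf (wedge (R := R) u u') = ν u (f u') - ν u' (f u))
    (c : ↥(⋀[R]^2 H)) (β : ↥(tSub R H)) (b : ↥(⋀[R]^2 H)) (w : H) :
    ((2 : R) • (LinearMap.flip ν c) w + β + Υf ((2 : R) • f w + (2 : R) • b),
      (2 : R) • f w + b, w) =
    (β + ν v b - ν w ((-(2 : R)) • c) + ⅟(2 : R) • ν v (wedge (R := R) v w),
      b + wedge (R := R) v w, w) := by
  have h2fw : (2 : R) • f w = wedge (R := R) v w := by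
    rw [hf2 w, smul_smul, mul_invOf_self, one_smul]
  have hident : (2 : R) • Υf = ν v := by
    apply ext_wedge
    intro u u'
    rw [LinearMap.smul_apply, hU, hf2 u', hf2 u, map_smul, map_smul, smul_sub,
      smul_smul, smul_smul, mul_invOf_self, one_smul, one_smul, nu_swap ν hν v u u']
  have hub : Υf ((2 : R) • b) = ν v b := by
    rw [map_smul, ← LinearMap.smul_apply, hident]
  refine Prod.ext ?_ (Prod.ext ?_ rfl)
  · dsimp only
    rw [h2fw, map_add, hub, hU v w, hf2 w, hf2 v, wedge_self, smul_zero, map_zero,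
      sub_zero, map_smul, LinearMap.flip_apply, map_smul, neg_smul, sub_neg_eq_add]
    abel
  · dsimp only
    rw [h2fw, add_comm]

set_option maxHeartbeats 2000000 in
set_option synthInstance.maxHeartbeats 1000000 in
/-- Under the isomorphism `𝒜 ≅ Aut(L₃)` of Statement 12 (any equivalence
`Θ` realizing the action formula and compatible with the `𝒜`-multiplication), the inner
automorphism group `Inn(L₃)` corresponds to the subset `R₃ × N × {id_H}` of `𝒜`, where
`R₃ ⊆ Hom(H, 𝔱)` is spanned by the maps `γ_{s,t} : x ↦ ν(x, e_s ∧ e_t)` (`s < t`) and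
`N ⊆ Hom(H, Λ²H)` consists of the maps `f_b : x ↦ x ∧ b`. -/
theorem stmt14 (P : Ideal ℤ) [P.IsPrime] (hP2 : (2 : ℤ) ∉ P) (hP3 : (3 : ℤ) ∉ P)
    [Algebra ℤ R] [IsLocalization.AtPrime R P] {g : ℕ} (hg : 1 ≤ g)
    (e : Module.Basis (Fin (2 * g)) R H)
    (ν : H →ₗ[R] ↥(⋀[R]^2 H) →ₗ[R] ↥(tSub R H))
    (hν : ∀ u v w : H,
      (↑(ν u (wedge (R := R) v w)) : H ⊗[R] ↥(⋀[R]^2 H)) =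
        ((2 : R) * ⅟(3 : R)) • u ⊗ₜ[R] wedge (R := R) v w -
          ⅟(3 : R) • v ⊗ₜ[R] wedge (R := R) w u -
          ⅟(3 : R) • w ⊗ₜ[R] wedge (R := R) u v)
    (Υ : (H →ₗ[R] ↥(⋀[R]^2 H)) → (↥(⋀[R]^2 H) →ₗ[R] ↥(tSub R H)))
    (hΥ : ∀ (f : H →ₗ[R] ↥(⋀[R]^2 H)) (u v : H),
      Υ f (wedge (R := R) u v) = ν u (f v) - ν v (f u))
    (Θ : ((H →ₗ[R] ↥(tSub R H)) × (H →ₗ[R] ↥(⋀[R]^2 H)) × (H ≃ₗ[R] H)) ≃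
        {σ : (↥(tSub R H) × ↥(⋀[R]^2 H) × H) ≃ (↥(tSub R H) × ↥(⋀[R]^2 H) × H) //
          ∀ x y, σ (l3mul ν x y) = l3mul ν (σ x) (σ y)})
    (hΘ1 : ∀ (F : H →ₗ[R] ↥(tSub R H)) (f : H →ₗ[R] ↥(⋀[R]^2 H)) (A : H ≃ₗ[R] H)
        (α : ↥(tSub R H)) (a : ↥(⋀[R]^2 H)) (v : H),
      (Θ (F, f, A)).1 (α, a, v) =
        ((2 : R) • F (A v) + tRestrict (A : H →ₗ[R] H) α +
            Υ f ((2 : R) • f (A v) + (2 : R) • map2 (A : H →ₗ[R] H) a),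
          (2 : R) • f (A v) + map2 (A : H →ₗ[R] H) a,
          A v))
    (hΘ2 : ∀ x y, (Θ (aMul Υ x y)).1 = ((Θ y).1.trans (Θ x).1)) :
    ∀ (F : H →ₗ[R] ↥(tSub R H)) (f : H →ₗ[R] ↥(⋀[R]^2 H)) (A : H ≃ₗ[R] H),
      (∃ y z : ↥(tSub R H) × ↥(⋀[R]^2 H) × H,
          l3mul ν y z = (0, 0, 0) ∧ l3mul ν z y = (0, 0, 0) ∧
            ∀ x, (Θ (F, f, A)).1 x = l3mul ν (l3mul ν y x) z) ↔
        (F ∈ Submodule.span R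
            {F' : H →ₗ[R] ↥(tSub R H) | ∃ s t : Fin (2 * g), s < t ∧
              F' = LinearMap.flip ν (wedge (R := R) (e s) (e t))} ∧
          f ∈ LinearMap.range (LinearMap.flip (wedge (R := R) (H := H))) ∧
          A = 1) := by
  intro F f A
  have h2 : (2 : R) * ⅟(2 : R) = 1 := mul_invOf_self 2
  have h2' : ⅟(2 : R) * (2 : R) = 1 := invOf_mul_self 2
  have h3 : (3 : R) * ⅟(3 : R) = 1 := mul_invOf_self 3
  have hco : ((1 : H ≃ₗ[R] H) : H →ₗ[R] H) = LinearMap.id := rfl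
  constructor
  · rintro ⟨⟨α, a, v⟩, ⟨α', a', v'⟩, hyz, -, hσ⟩
    have hyz1 : v + v' = 0 := congrArg (fun p => p.2.2) hyz
    have hv' : v' = -v := eq_neg_of_add_eq_zero_right hyz1
    subst hv'
    have hyz2 : a + a' + ⅟(2 : R) • wedge (R := R) v (-v) = 0 :=
      congrArg (fun p => p.2.1) hyz
    have ha' : a' = -a := by
      rw [map_neg, wedge_self, neg_zero, smul_zero, add_zero] at hyz2
      exact eq_neg_of_add_eq_zero_right hyz2
    subst ha'
    have hyz0 := congrArg (fun p => p.1) hyz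
    simp only [l3mul, map_neg, LinearMap.neg_apply, wedge_self, smul_neg, neg_neg,
      neg_zero, map_zero, smul_zero, add_zero, zero_add, sub_neg_eq_add,
      sub_self, add_neg_cancel, neg_add_cancel] at hyz0
    have hα' : α' = -α := by
      rw [add_assoc (α + α'), neg_add_cancel, add_zero] at hyz0
      exact eq_neg_of_add_eq_zero_right hyz0
    subst hα'
    have hmain : ∀ (β : ↥(tSub R H)) (b : ↥(⋀[R]^2 H)) (w : H),
        ((2 : R) • F (A w) + tRestrict (A : H →ₗ[R] H) β +
            Υ f ((2 : R) • f (A w) + (2 : R) • map2 (A : H →ₗ[R] H) b),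
          (2 : R) • f (A w) + map2 (A : H →ₗ[R] H) b,
          A w) =
        (β + ν v b - ν w a + ⅟(2 : R) • ν v (wedge (R := R) v w),
          b + wedge (R := R) v w, w) := by
      intro β b w
      rw [← hΘ1, hσ (β, b, w), conj_formula]
    have hA : A = 1 := by
      apply LinearEquiv.toLinearMap_injective
      apply LinearMap.ext
      intro w
      exact congrArg (fun p => p.2.2) (hmain 0 0 w)
    subst hA
    have hfw : ∀ w, (2 : R) • f w = wedge (R := R) v w := by
      intro w
      have h0 := congrArg (fun p => p.2.1) (hmain 0 0 w)
      simpa only [hco, map2_one, LinearMap.id_apply, LinearEquiv.coe_one, id_eq,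
        map_zero, add_zero, zero_add] using h0
    have hf2 : ∀ w, f w = ⅟(2 : R) • wedge (R := R) v w := by
      intro w
      rw [← hfw w, smul_smul, h2', one_smul]
    have hFw : ∀ w, F w = ν w ((-(⅟(2 : R))) • a) := by
      intro w
      have h1 := congrArg (fun p => p.1) (hmain 0 0 w)
      simp only [hco, map2_one, LinearEquiv.coe_one, id_eq, LinearMap.id_apply,
        tRestrict_one, map_zero, smul_zero, add_zero, zero_add, zero_sub] at h1
      rw [hfw w, hΥ, hf2 v, wedge_self, smul_zero, map_zero, sub_zero,
        hf2 w, map_smul] at h1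
      have h1' : (2 : R) • F w = -(ν w a) := add_right_cancel h1
      calc F w = ⅟(2 : R) • ((2 : R) • F w) := by rw [smul_smul, h2', one_smul]
        _ = ⅟(2 : R) • (-(ν w a)) := by rw [h1']
        _ = ν w ((-(⅟(2 : R))) • a) := by rw [map_smul, smul_neg, neg_smul]
    refine ⟨?_, ⟨(-(⅟(2 : R))) • v, ?_⟩, rfl⟩
    · have hF : F = LinearMap.flip ν ((-(⅟(2 : R))) • a) :=
        LinearMap.ext fun w => by rw [LinearMap.flip_apply]; exact hFw w
      rw [hF]
      have hmem : ((-(⅟(2 : R))) • a) ∈ (⊤ : Submodule R ↥(⋀[R]^2 H)) := trivial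
      rw [← basis_wedge_span e] at hmem
      have hmap := Submodule.mem_map_of_mem (f := LinearMap.flip ν) hmem
      rw [Submodule.map_span] at hmap
      refine Submodule.span_mono ?_ hmap
      rintro _ ⟨c, ⟨sIdx, tIdx, hst, rfl⟩, rfl⟩
      exact ⟨sIdx, tIdx, hst, rfl⟩
    · apply LinearMap.ext
      intro w
      rw [LinearMap.flip_apply, hf2 w, map_smul,
        show wedge (R := R) w v = -wedge (R := R) v w from wedge_anti v w,
        smul_neg, neg_smul, neg_neg]
  · rintro ⟨hF, ⟨b₀, hb₀⟩, rfl⟩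
    obtain ⟨c, hc⟩ : ∃ c, LinearMap.flip ν c = F := by
      have hle : Submodule.span R
          {F' : H →ₗ[R] ↥(tSub R H) | ∃ s t : Fin (2 * g), s < t ∧
            F' = LinearMap.flip ν (wedge (R := R) (e s) (e t))} ≤
          LinearMap.range (LinearMap.flip ν) := by
        refine Submodule.span_le.mpr ?_
        rintro F' ⟨sIdx, tIdx, hst, rfl⟩
        exact ⟨wedge (R := R) (e sIdx) (e tIdx), rfl⟩
      exact hle hF
    refine ⟨(0, (-(2 : R)) • c, (-(2 : R)) • b₀),
      (0, -((-(2 : R)) • c), -((-(2 : R)) • b₀)),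
      l3mul_inv1 ν _ _, l3mul_inv2 ν _ _, ?_⟩
    rintro ⟨β, b, w⟩
    rw [show ((0 : ↥(tSub R H)), -((-(2 : R)) • c), -((-(2 : R)) • b₀)) =
        (-(0 : ↥(tSub R H)), -((-(2 : R)) • c), -((-(2 : R)) • b₀)) by rw [neg_zero],
      conj_formula, hΘ1]
    have hf2 : ∀ u, f u = ⅟(2 : R) • wedge (R := R) ((-(2 : R)) • b₀) u := by
      intro u
      rw [← hb₀]
      exact flip_wedge_half b₀ u
    have := theta_conj_comp ν hν f (Υ f) ((-(2 : R)) • b₀) hf2 (hΥ f) c β b w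
    simpa only [hco, map2_one, tRestrict_one, LinearMap.id_apply,
      LinearEquiv.coe_one, id_eq, ← hc] using this


end A3

end Paper
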